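/- Let G be a finite simple graph with vertex set V and edge set E, and let S ⊆ E. Let I, K ⊆ V and w' ∈ V be such that: I, K and {w'} are pairwise disjoint; the induced subgraph G[I] is connected; every neighbour of a vertex of I lying outside I belongs to K ∪ {w'}; K induces a clique in G; and no edge of S has both endpoints in I ∪ K. If T ⊆ V is such that the subgraph of G induced on V ∖ T contains no S-cycle, then for T' = (T ∖ I) ∪ {w'} the subgraph of G induced on V ∖ T' also contains no S-cycle; moreover, if T ∩ I ≠ ∅ then |T'| ≤ |T|. -/

import Mathlib

open SimpleGraph

/-- Restriction of a graph to a vertex set (keeping the same vertex type). -/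
def GRestrict {V : Type} (G : SimpleGraph V) (U : Set V) : SimpleGraph V where
  Adj a b := G.Adj a b ∧ a ∈ U ∧ b ∈ U
  symm := ⟨fun a b (h : G.Adj a b ∧ a ∈ U ∧ b ∈ U) => ⟨h.1.symm, h.2.2, h.2.1⟩⟩
  loopless := ⟨fun a (h : G.Adj a a ∧ a ∈ U ∧ a ∈ U) => G.loopless.irrefl a h.1⟩

@[simp] lemma GRestrict_adj {V : Type} (G : SimpleGraph V) (U : Set V) {a b : V} :
    (GRestrict G U).Adj a b ↔ G.Adj a b ∧ a ∈ U ∧ b ∈ U := Iff.rfl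

lemma GRestrict_sdiff_adj {V : Type} (G : SimpleGraph V) (U : Set V) (e : Sym2 V) {a b : V} :
    ((GRestrict G U) \ fromEdgeSet {e}).Adj a b ↔
      G.Adj a b ∧ a ∈ U ∧ b ∈ U ∧ s(a, b) ≠ e := by
  simp only [sdiff_adj, GRestrict_adj, fromEdgeSet_adj, Set.mem_singleton_iff, not_and, not_ne_iff]
  constructor
  · rintro ⟨⟨h1, h2, h3⟩, h4⟩
    exact ⟨h1, h2, h3, fun hEq => h1.ne (h4 hEq)⟩
  · rintro ⟨h1, h2, h3, h4⟩
    exact ⟨⟨h1, h2, h3⟩, fun hEq => absurd hEq h4⟩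

lemma GRestrict_walk_support {V : Type} (G : SimpleGraph V) (U : Set V) :
    ∀ {u v : V} (p : (GRestrict G U).Walk u v), u ∈ U → ∀ x ∈ p.support, x ∈ U := by
  intro u v p
  induction p with
  | nil =>
    intro hu x hx
    simp only [Walk.support_nil, List.mem_singleton] at hx
    exact hx ▸ hu
  | cons h q ih =>
    intro hu x hx
    rw [Walk.support_cons] at hx
    rcases List.mem_cons.mp hx with rfl | hx
    · exact hu
    · exact ih h.2.2 x hx

/-- The rerouting lemma: a walk avoiding `T' = (T \ I) ∪ {w'}` and the edge `e`, with both
endpoints outside `I`, yields reachability avoiding `T` and `e`. -/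
lemma reroute_aux {V : Type} (G : SimpleGraph V) (I K : Set V) (w' : V) (T : Set V) (e : Sym2 V)
    (hnbr : ∀ u ∈ I, ∀ x, x ∉ I → G.Adj u x → x ∈ K ∪ {w'})
    (hclique : ∀ a ∈ K, ∀ b ∈ K, a ≠ b → G.Adj a b)
    (heK : ∀ a b, a ∈ K → b ∈ K → s(a, b) ≠ e) :
    ∀ n : ℕ, ∀ u v : V,
      ∀ p : ((GRestrict G ((T \ I ∪ {w'})ᶜ)) \ fromEdgeSet {e}).Walk u v,
      p.length ≤ n → v ∉ I →
      (u ∉ I → ((GRestrict G Tᶜ) \ fromEdgeSet {e}).Reachable u v) ∧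
      (u ∈ I → ∃ b, b ∉ T ∧ b ∈ K ∧ ((GRestrict G Tᶜ) \ fromEdgeSet {e}).Reachable b v) := by
  intro n
  induction n with
  | zero =>
    intro u v p hlen hv
    cases p with
    | nil => exact ⟨fun _ => Reachable.refl _, fun hu => absurd hu hv⟩
    | cons h q => simp [Walk.length_cons] at hlen
  | succ n ih =>
    intro u v p hlen hv
    cases p with
    | nil => exact ⟨fun _ => Reachable.refl _, fun hu => absurd hu hv⟩
    | @cons _ v' _ h q =>
      rw [Walk.length_cons, Nat.succ_le_succ_iff] at hlen
      obtain ⟨hadj, huT', hv'T', hne⟩ := (GRestrict_sdiff_adj G _ e).mp h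
      simp only [Set.mem_compl_iff, Set.mem_union, Set.mem_diff, Set.mem_singleton_iff,
        not_or, not_and] at huT' hv'T'
      have IHq := ih v' v q hlen hv
      by_cases hv'I : v' ∈ I
      · obtain ⟨b, hbT, hbK, hbr⟩ := IHq.2 hv'I
        have main : u ∉ I → ((GRestrict G Tᶜ) \ fromEdgeSet {e}).Reachable u v := by
          intro huI
          have huK : u ∈ K := by
            rcases hnbr v' hv'I u huI hadj.symm with hK | hw
            · exact hK
            · exact absurd hw huT'.2
          have huT : u ∉ T := fun hT => huT'.1 hT huI
          by_cases hub : u = b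
          · exact hub ▸ hbr
          · exact (Adj.reachable ((GRestrict_sdiff_adj G _ e).mpr
              ⟨hclique u huK b hbK hub, huT, hbT, heK u b huK hbK⟩)).trans hbr
        exact ⟨main, fun _ => ⟨b, hbT, hbK, hbr⟩⟩
      · have hr := IHq.1 hv'I
        have hv'T : v' ∉ T := fun hT => hv'T'.1 hT hv'I
        constructor
        · intro huI
          have huT : u ∉ T := fun hT => huT'.1 hT huI
          exact (Adj.reachable ((GRestrict_sdiff_adj G _ e).mpr
            ⟨hadj, huT, hv'T, hne⟩)).trans hr
        · intro huI
          have hv'K : v' ∈ K := by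
            rcases hnbr u huI v' hv'I hadj with hK | hw
            · exact hK
            · exact absurd hw hv'T'.2
          exact ⟨v', hv'T, hv'K, hr⟩

/-- (Clique bubble shifting.) Let `I`, `K` and `{w'}` be pairwise
disjoint, `G[I]` connected, all neighbours of `I` outside `I` lying in `K ∪ {w'}`,
`K` a clique, and no edge of `S` with both endpoints in `I ∪ K`. If `T` hits all
`S`-cycles then so does `T' = (T ∖ I) ∪ {w'}`; moreover if `T ∩ I ≠ ∅` then
`|T'| ≤ |T|`. -/
theorem clique_bubble_shift {V : Type} [Fintype V]
    (G : SimpleGraph V) (S : Set (Sym2 V)) (hS : S ⊆ G.edgeSet)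
    (I K : Set V) (w' : V)
    (hIK : Disjoint I K) (hwI : w' ∉ I) (hwK : w' ∉ K)
    (hconn : (G.induce I).Connected)
    (hnbr : ∀ u ∈ I, ∀ x, x ∉ I → G.Adj u x → x ∈ K ∪ {w'})
    (hclique : ∀ a ∈ K, ∀ b ∈ K, a ≠ b → G.Adj a b)
    (hSIK : ∀ x y : V, x ∈ I ∪ K → y ∈ I ∪ K → s(x, y) ∉ S)
    (T : Set V)
    (hhit : ∀ (w : V) (c : G.Walk w w), c.IsCycle → (∀ x ∈ c.support, x ∉ T) →
      ∀ e ∈ c.edges, e ∉ S) :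
    (∀ (w : V) (c : G.Walk w w), c.IsCycle →
        (∀ x ∈ c.support, x ∉ (T \ I) ∪ {w'}) → ∀ e ∈ c.edges, e ∉ S) ∧
      ((T ∩ I).Nonempty → ((T \ I) ∪ {w'}).ncard ≤ T.ncard) := by
  constructor
  · intro w c hc hsupp e he heS
    revert he heS
    induction e using Sym2.ind with
    | _ x y =>
    intro he heS
    have hxy : G.Adj x y := c.adj_of_mem_edges he
    have hxs : x ∈ c.support := c.fst_mem_support_of_mem_edges he
    have hys : y ∈ c.support := c.snd_mem_support_of_mem_edges he
    have hxT' := hsupp x hxs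
    have hyT' := hsupp y hys
    -- endpoints of `e` are not in `I`
    have hnotI : ∀ a b : V, G.Adj a b → (a ∉ (T \ I) ∪ {w'}) → (b ∉ (T \ I) ∪ {w'}) →
        s(a, b) ∈ S → a ∉ I := by
      intro a b hab haT' hbT' habS haI
      by_cases hbI : b ∈ I
      · exact hSIK a b (Or.inl haI) (Or.inl hbI) habS
      · rcases hnbr a haI b hbI hab with hK | hw
        · exact hSIK a b (Or.inl haI) (Or.inr hK) habS
        · exact hbT' (Or.inr hw)
    have hxI : x ∉ I := hnotI x y hxy hxT' hyT' heS
    have hyI : y ∉ I := hnotI y x hxy.symm hyT' hxT' (by rwa [Sym2.eq_swap])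
    have hxyK : x ∉ K ∨ y ∉ K := by
      by_contra hcon
      push_neg at hcon
      exact hSIK x y (Or.inr hcon.1) (Or.inr hcon.2) heS
    have heK : ∀ a b, a ∈ K → b ∈ K → s(a, b) ≠ s(x, y) := by
      intro a b ha hb hEq
      rw [Sym2.eq_iff] at hEq
      rcases hEq with ⟨rfl, rfl⟩ | ⟨rfl, rfl⟩ <;>
        rcases hxyK with h | h <;> exact h ‹_›
    -- transfer the cycle to the restricted graph avoiding T'
    have hT'edges : ∀ f ∈ c.edges, f ∈ (GRestrict G ((T \ I ∪ {w'})ᶜ)).edgeSet := by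
      intro f hf
      induction f using Sym2.ind with
      | _ a b =>
        exact ⟨c.adj_of_mem_edges hf, hsupp a (c.fst_mem_support_of_mem_edges hf),
          hsupp b (c.snd_mem_support_of_mem_edges hf)⟩
    have hc' := hc.transfer hT'edges
    have he' : s(x, y) ∈ (c.transfer _ hT'edges).edges := by
      rw [Walk.edges_transfer]; exact he
    have hreach := (adj_and_reachable_delete_edges_iff_exists_cycle.mpr
      ⟨w, c.transfer _ hT'edges, hc', he'⟩).2
    obtain ⟨p⟩ := hreach
    have hreach2 : ((GRestrict G Tᶜ) \ fromEdgeSet {s(x, y)}).Reachable x y :=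
      (reroute_aux G I K w' T s(x, y) hnbr hclique heK p.length x y p le_rfl hyI).1 hxI
    have hxT : x ∉ T := by
      intro hT
      exact hxT' (Or.inl ⟨hT, hxI⟩)
    have hyT : y ∉ T := by
      intro hT
      exact hyT' (Or.inl ⟨hT, hyI⟩)
    have hAdjT : (GRestrict G Tᶜ).Adj x y := ⟨hxy, hxT, hyT⟩
    obtain ⟨u, q, hq, heq⟩ := adj_and_reachable_delete_edges_iff_exists_cycle.mp ⟨hAdjT, hreach2⟩
    have hqe : ∀ f ∈ q.edges, f ∈ G.edgeSet := by
      intro f hf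
      induction f using Sym2.ind with
      | _ a b => exact (q.adj_of_mem_edges hf).1
    have huT : u ∈ (Tᶜ : Set V) := by
      cases q with
      | nil => exact absurd rfl hq.ne_nil
      | cons h r => exact h.2.1
    refine hhit u (q.transfer G hqe) (hq.transfer hqe) ?_ s(x, y) ?_ heS
    · intro z hz
      rw [Walk.support_transfer] at hz
      exact GRestrict_walk_support G Tᶜ q huT z hz
    · rw [Walk.edges_transfer]; exact heq
  · rintro ⟨z, hzT, hzI⟩
    have h1 : ((T \ I) ∪ {w'}).ncard ≤ (T \ I).ncard + 1 := by
      simpa using Set.ncard_union_le (T \ I) {w'}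
    have h2 : (T \ I).ncard + 1 ≤ T.ncard := by
      have hss : T \ I ⊂ T := by
        constructor
        · exact Set.diff_subset
        · intro hsub
          exact (hsub hzT).2 hzI
      exact Set.ncard_lt_ncard hss (Set.toFinite T)
    exact h1.trans h2
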